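/- Let P(x) = ∑_{n=0}^{N−1} a_n x^n with all a_n = ±1, a_0 = 1, and suppose P is a product of cyclotomic polynomials (up to sign). Let i be minimal with a_i = −1 (assume 2 ≤ i ≤ N−1) and let S_k be the k-th power sum of the roots of P. If S_k = −1 for every k with 1 ≤ k ≤ N−2 not divisible by i, then P(x) = (1 + x + ⋯ + x^{i−1})·Q(x^i) for some polynomial Q(y) = ∑_{l=0}^{N/i−1} b_l y^l with all b_l = ±1. -/

import Mathlib

open Polynomial Finset

lemma multiset_newton (s : Multiset ℂ) (k : ℕ) :
    (k : ℂ) * s.esymm k = (-1) ^ (k + 1) *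
      ∑ a ∈ Finset.filter (fun a => a.1 < k) (antidiagonal k),
        (-1) ^ a.1 * s.esymm a.1 * (s.map (fun r => r ^ a.2)).sum := by
  obtain ⟨l, rfl⟩ : ∃ l : List ℂ, (l : Multiset ℂ) = s := ⟨s.toList, s.coe_toList⟩
  let f : Fin l.length → ℂ := l.get
  have hf : Multiset.map f Finset.univ.val = (l : Multiset ℂ) := by
    rw [Fin.univ_val_map]
    simp [f, List.ofFn_get]
  have h := congrArg (MvPolynomial.aeval f) (MvPolynomial.mul_esymm_eq_sum (Fin l.length) ℂ k)
  simp only [map_mul, map_sum, map_pow, map_neg, map_one, map_natCast,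
    MvPolynomial.aeval_esymm_eq_multiset_esymm, hf] at h
  convert h using 3 with a ha
  congr 1
  simp only [MvPolynomial.psum, map_sum, map_pow, MvPolynomial.aeval_X]
  rw [Finset.sum, ← hf]
  simp [Multiset.map_map, Function.comp_def]

theorem littlewood_cyclotomic_block_factorization (N i : ℕ) (P : Polynomial ℤ) (hN : 2 ≤ N)
    (hdeg : P.natDegree = N - 1)
    (hcoeff : ∀ n ≤ N - 1, P.coeff n = 1 ∨ P.coeff n = -1)
    (ha0 : P.coeff 0 = 1)
    (hcyc : ∃ (c : ℤ) (D : ℕ) (e : ℕ → ℕ), (c = 1 ∨ c = -1) ∧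
      P = C c * ∏ d ∈ Finset.Icc 1 D, (cyclotomic d ℤ) ^ e d)
    (hi1 : 2 ≤ i) (hi2 : i ≤ N - 1)
    (hones : ∀ n < i, P.coeff n = 1) (hneg : P.coeff i = -1)
    (S : ℕ → ℂ)
    (hS : ∀ k, S k = (((P.map (Int.castRingHom ℂ)).roots).map (fun r => r ^ k)).sum)
    (hSk : ∀ k, 1 ≤ k → k ≤ N - 2 → ¬ i ∣ k → S k = -1) :
    ∃ Q : Polynomial ℤ, Q.natDegree = N / i - 1 ∧
      (∀ l ≤ N / i - 1, Q.coeff l = 1 ∨ Q.coeff l = -1) ∧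
      P = (∑ n ∈ Finset.range i, (X : Polynomial ℤ) ^ n) * Q.comp (X ^ i) := by
  clear hcyc
  set d := N - 1 with hd
  set Pc := P.map (Int.castRingHom ℂ) with hPc
  have hipos : 0 < i := by omega
  have hP0 : P ≠ 0 := fun h => by simp [h] at ha0
  have hleadne : P.coeff d ≠ 0 := by rcases hcoeff d le_rfl with h | h <;> simp [h]
  have hlc : P.leadingCoeff = P.coeff d := by rw [Polynomial.leadingCoeff, hdeg]
  have hleadC : ((P.coeff d : ℤ) : ℂ) ≠ 0 := by exact_mod_cast hleadne
  have hPcdeg : Pc.natDegree = d := by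
    rw [hPc, natDegree_map_of_leadingCoeff_ne_zero, hdeg]
    rw [hlc]
    simpa using hleadC
  have hcard : Multiset.card Pc.roots = Pc.natDegree :=
    (Polynomial.splits_iff_card_roots).mp (IsAlgClosed.splits _)
  set c : ℂ := Pc.leadingCoeff with hc
  set B : ℕ → ℂ := fun n => c * (-1) ^ n * Pc.roots.esymm n with hB
  -- B n equals the casted integer coefficient P.coeff (d - n) for n ≤ d
  have hBcoeff : ∀ n ≤ d, B n = ((P.coeff (d - n) : ℤ) : ℂ) := by
    intro n hn
    have h1 : Pc.natDegree - (d - n) = n := by omega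
    have h2 : d - n ≤ Pc.natDegree := by omega
    have h3 := Polynomial.coeff_eq_esymm_roots_of_card hcard h2
    rw [h1, ← hc] at h3
    simp only [hB]
    rw [← h3, hPc, Polynomial.coeff_map]
    simp
  -- Newton's identities in the B / S form
  have hNewt : ∀ k : ℕ, (k : ℂ) * B k = -∑ j ∈ Icc 1 k, B (k - j) * S j := by
    intro k
    have h := multiset_newton Pc.roots k
    have h2 : (k : ℂ) * B k = c * (-1) ^ k * ((k : ℂ) * Pc.roots.esymm k) := by
      simp only [hB]; ring
    rw [h2, h]
    have hsgn : c * (-1 : ℂ) ^ k * (-1) ^ (k + 1) = -c := by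
      rw [mul_assoc, ← pow_add, show k + (k + 1) = 2 * k + 1 from by omega,
        pow_succ, pow_mul]
      simp
    rw [← mul_assoc, hsgn, Finset.mul_sum]
    rw [show -∑ j ∈ Icc 1 k, B (k - j) * S j =
        ∑ j ∈ Icc 1 k, -(B (k - j) * S j) from (Finset.sum_neg_distrib _).symm]
    refine Finset.sum_nbij' (fun a => a.2) (fun j => (k - j, j)) ?_ ?_ ?_ ?_ ?_
    · intro a ha
      simp only [Finset.mem_filter, Finset.HasAntidiagonal.mem_antidiagonal] at ha
      simp only [Finset.mem_Icc]
      omega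
    · intro j hj
      simp only [Finset.mem_Icc] at hj
      simp only [Finset.mem_filter, Finset.HasAntidiagonal.mem_antidiagonal]
      omega
    · intro a ha
      simp only [Finset.mem_filter, Finset.HasAntidiagonal.mem_antidiagonal] at ha
      have h5 : k - a.2 = a.1 := by omega
      show (k - a.2, a.2) = a
      rw [h5]
    · intro j hj; rfl
    · intro a ha
      simp only [Finset.mem_filter, Finset.HasAntidiagonal.mem_antidiagonal] at ha
      have ha1 : a.1 = k - a.2 := by omega
      rw [← hS a.2, hB, ← ha1]
      simp only [hB]
      ring
  set T : ℕ → ℂ := fun k => ∑ n ∈ range k, B n with hT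
  set u : ℕ → ℂ := fun l => S (l * i) + 1 with hu
  have hE : ∀ k ≤ N - 2, (k : ℂ) * B k - T k + ∑ l ∈ Icc 1 (k / i), B (k - l * i) * u l = 0 := by
    intro k hk
    have h := hNewt k
    have hsplit : ∑ j ∈ Icc 1 k, B (k - j) * S j
        = (∑ j ∈ Icc 1 k, B (k - j) * (S j + 1)) - ∑ j ∈ Icc 1 k, B (k - j) := by
      rw [← Finset.sum_sub_distrib]
      exact Finset.sum_congr rfl fun j _ => by ring
    have hTk : ∑ j ∈ Icc 1 k, B (k - j) = T k := by
      simp only [hT]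
      refine Finset.sum_nbij' (fun j => k - j) (fun n => k - n) ?_ ?_ ?_ ?_ ?_
      · intro j hj; simp only [Finset.mem_Icc] at hj; simp only [Finset.mem_range]; omega
      · intro n hn; simp only [Finset.mem_range] at hn; simp only [Finset.mem_Icc]; omega
      · intro j hj; simp only [Finset.mem_Icc] at hj; show k - (k - j) = j; omega
      · intro n hn; simp only [Finset.mem_range] at hn; show k - (k - n) = n; omega
      · intro j hj; rfl
    have hvan : ∑ j ∈ Icc 1 k, B (k - j) * (S j + 1)
        = ∑ l ∈ Icc 1 (k / i), B (k - l * i) * u l := by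
      rw [← Finset.sum_filter_add_sum_filter_not (Icc 1 k) (fun j => i ∣ j)]
      have hz : ∑ j ∈ (Icc 1 k).filter (fun j => ¬ i ∣ j), B (k - j) * (S j + 1) = 0 := by
        refine Finset.sum_eq_zero fun j hj => ?_
        simp only [Finset.mem_filter, Finset.mem_Icc] at hj
        rw [hSk j hj.1.1 (by omega) hj.2]
        ring
      rw [hz, add_zero]
      refine Finset.sum_nbij' (fun j => j / i) (fun l => l * i) ?_ ?_ ?_ ?_ ?_
      · intro j hj
        simp only [Finset.mem_filter, Finset.mem_Icc] at hj
        simp only [Finset.mem_Icc]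
        exact ⟨(Nat.one_le_div_iff hipos).mpr (Nat.le_of_dvd (by omega) hj.2),
          Nat.div_le_div_right hj.1.2⟩
      · intro l hl
        simp only [Finset.mem_Icc] at hl
        simp only [Finset.mem_filter, Finset.mem_Icc]
        exact ⟨⟨Nat.mul_pos (by omega) hipos, (Nat.le_div_iff_mul_le hipos).mp hl.2⟩,
          dvd_mul_left i l⟩
      · intro j hj
        simp only [Finset.mem_filter, Finset.mem_Icc] at hj
        exact Nat.div_mul_cancel hj.2
      · intro l hl
        exact Nat.mul_div_cancel l hipos
      · intro j hj
        simp only [Finset.mem_filter, Finset.mem_Icc] at hj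
        simp only [hu]
        rw [Nat.div_mul_cancel hj.2]
    rw [hsplit, hTk, hvan] at h
    linear_combination h
  -- main induction: consecutive reversed coefficients in the same block agree
  have hstep : ∀ k : ℕ, k + 1 ≤ N - 2 → ¬ i ∣ (k + 1) → B (k + 1) = B k := by
    intro k
    induction k using Nat.strong_induction_on with
    | _ k IH =>
    intro hk hnd
    have h1 := hE k (by omega)
    have h2 := hE (k + 1) hk
    have hdiv : (k + 1) / i = k / i := by rw [Nat.succ_div]; simp [hnd]
    rw [hdiv] at h2
    have hsum : ∑ l ∈ Icc 1 (k / i), B (k + 1 - l * i) * u l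
        = ∑ l ∈ Icc 1 (k / i), B (k - l * i) * u l := by
      refine Finset.sum_congr rfl fun l hl => ?_
      simp only [Finset.mem_Icc] at hl
      have hli : l * i ≤ k := (Nat.le_div_iff_mul_le hipos).mp hl.2
      have h4 : 0 < l * i := Nat.mul_pos (by omega) hipos
      have h3 : k + 1 - l * i = (k - l * i) + 1 := by omega
      have hnd' : ¬ i ∣ (k - l * i + 1) := by
        rintro ⟨cc, hcc⟩
        refine hnd ⟨cc + l, ?_⟩
        rw [Nat.mul_add, Nat.mul_comm i l]
        omega
      rw [h3, IH (k - l * i) (by omega) (by omega) hnd']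
    rw [hsum] at h2
    have hTk1 : T (k + 1) = T k + B k := by
      simp only [hT]
      exact Finset.sum_range_succ _ _
    rw [hTk1] at h2
    have hmul : ((k : ℂ) + 1) * B (k + 1) = ((k : ℂ) + 1) * B k := by
      push_cast at h2
      linear_combination h2 - h1
    have hk0 : ((k : ℂ) + 1) ≠ 0 := by exact_mod_cast Nat.succ_ne_zero k
    exact mul_left_cancel₀ hk0 hmul
  -- integer version, forward indexing
  have hstepZ : ∀ n, 1 ≤ n → n ≤ d - 1 → ¬ i ∣ (d - n) → P.coeff n = P.coeff (n + 1) := by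
    intro n h1 h2 h3
    have e1 : d - n - 1 + 1 = d - n := by omega
    have hk := hstep (d - n - 1) (by omega) (by rw [e1]; exact h3)
    rw [e1] at hk
    rw [hBcoeff (d - n) (by omega), hBcoeff (d - n - 1) (by omega)] at hk
    have hcast : P.coeff (d - (d - n)) = P.coeff (d - (d - n - 1)) := by exact_mod_cast hk
    rw [show d - (d - n) = n from by omega, show d - (d - n - 1) = n + 1 from by omega] at hcast
    exact hcast
  -- i divides N
  have hiN : i ∣ N := by
    by_contra hnd
    have hs1 : 1 ≤ N % i := by
      rcases Nat.eq_zero_or_pos (N % i) with h | h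
      · exact absurd (Nat.dvd_of_mod_eq_zero h) hnd
      · exact h
    have hsi : N % i < i := Nat.mod_lt _ hipos
    have hm : i * (N / i) + N % i = N := Nat.div_add_mod N i
    set s := N % i with hs
    set m := N / i with hm0
    have hm1 : 1 ≤ m := by
      rcases Nat.eq_zero_or_pos m with h | h
      · rw [h, Nat.mul_zero] at hm; omega
      · exact h
    have him : i * 1 ≤ i * m := Nat.mul_le_mul_left i hm1
    have chain : ∀ j, s + j ≤ i → P.coeff s = P.coeff (s + j) := by
      intro j
      induction j with
      | zero => intro _; rw [Nat.add_zero]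
      | succ j ih =>
        intro hj
        rw [show s + (j + 1) = (s + j) + 1 from by omega, ← hstepZ (s + j) (by omega)
          (by omega) ?_, ih (by omega)]
        rintro ⟨cc, hcc⟩
        have h4 : i * cc + (j + 1) + s = i * m + s := by omega
        have h5 : i ∣ j + 1 := ⟨m - cc, by rw [Nat.mul_sub]; omega⟩
        have h6 := Nat.le_of_dvd (by omega) h5
        omega
    have hch := chain (i - s) (by omega)
    rw [show s + (i - s) = i from by omega, hones s hsi, hneg] at hch
    omega
  obtain ⟨m, hNm⟩ := hiN
  have hm1 : 1 ≤ m := by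
    rcases Nat.eq_zero_or_pos m with h | h
    · rw [h, Nat.mul_zero] at hNm; omega
    · exact h
  have him : i * 1 ≤ i * m := Nat.mul_le_mul_left i hm1
  have hNdiv : N / i = m := by rw [hNm, Nat.mul_div_cancel_left _ hipos]
  -- block constancy
  have hblock : ∀ n ≤ d, P.coeff n = P.coeff (i * (n / i)) := by
    intro n hn
    rcases Nat.lt_or_ge n i with h | h
    · rw [Nat.div_eq_of_lt h, Nat.mul_zero, hones n h, ha0]
    · have hq1 : 1 ≤ n / i := (Nat.one_le_div_iff hipos).mpr h
      have hqm := Nat.div_add_mod n i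
      have hmod : n % i < i := Nat.mod_lt _ hipos
      have hq : i * 1 ≤ i * (n / i) := Nat.mul_le_mul_left i hq1
      have key : ∀ t, i * (n / i) + t ≤ n →
          P.coeff (i * (n / i)) = P.coeff (i * (n / i) + t) := by
        intro t
        induction t with
        | zero => intro _; rw [Nat.add_zero]
        | succ t ih =>
          intro ht
          rw [show i * (n / i) + (t + 1) = (i * (n / i) + t) + 1 from by omega,
            ← hstepZ (i * (n / i) + t) (by omega) (by omega) ?_, ih (by omega)]
          rintro ⟨cc, hcc⟩
          have h4 : i * cc + i * (n / i) + (t + 1) = i * m := by omega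
          have h5 : i ∣ t + 1 := ⟨m - cc - n / i, by rw [Nat.mul_sub, Nat.mul_sub]; omega⟩
          have h6 := Nat.le_of_dvd (by omega) h5
          omega
      have hkey := key (n - i * (n / i)) (by omega)
      rw [show i * (n / i) + (n - i * (n / i)) = n from by omega] at hkey
      exact hkey.symm
  -- construct Q
  set Q : Polynomial ℤ := ∑ l ∈ range m, C (P.coeff (i * l)) * X ^ l with hQ
  have hQc : ∀ t, Q.coeff t = if t < m then P.coeff (i * t) else 0 := by
    intro t
    rw [hQ, finset_sum_coeff]
    simp only [coeff_C_mul, coeff_X_pow, mul_ite, mul_one, mul_zero]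
    rw [Finset.sum_ite_eq]
    simp [Finset.mem_range]
  have hmul_sub : i * (m - 1) + i = i * m := by rw [Nat.mul_sub]; omega
  have hbound : ∀ l, l ≤ m - 1 → i * l ≤ N - 1 := by
    intro l hl
    have := Nat.mul_le_mul_left i hl
    omega
  have hQdeg : Q.natDegree = m - 1 := by
    apply le_antisymm
    · rw [natDegree_le_iff_coeff_eq_zero]
      intro t ht
      rw [hQc]
      simp [show ¬ t < m from by omega]
    · apply le_natDegree_of_ne_zero
      rw [hQc, if_pos (by omega)]
      rcases hcoeff (i * (m - 1)) (hbound _ le_rfl) with h | h <;> simp [h]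
  refine ⟨Q, by rw [hNdiv]; exact hQdeg, ?_, ?_⟩
  · intro l hl
    rw [hNdiv] at hl
    rw [hQc, if_pos (by omega)]
    exact hcoeff (i * l) (hbound _ hl)
  · have hcomp : Q.comp (X ^ i) = ∑ l ∈ range m, C (P.coeff (i * l)) * X ^ (i * l) := by
      rw [hQ, Polynomial.sum_comp]
      refine Finset.sum_congr rfl fun l _ => ?_
      rw [mul_comp, C_comp, pow_comp, X_comp, ← pow_mul]
    rw [hcomp, Finset.sum_mul_sum, ← Finset.sum_product']
    conv_lhs => rw [Polynomial.as_sum_range' P N (by rw [hdeg]; omega)]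
    refine Finset.sum_nbij' (fun n => (n % i, n / i)) (fun x => i * x.2 + x.1) ?_ ?_ ?_ ?_ ?_
    · intro n hn
      simp only [Finset.mem_range] at hn
      simp only [Finset.mem_product, Finset.mem_range]
      refine ⟨Nat.mod_lt _ hipos, (Nat.div_lt_iff_lt_mul hipos).mpr ?_⟩
      rw [Nat.mul_comm]
      omega
    · intro x hx
      simp only [Finset.mem_product, Finset.mem_range] at hx
      simp only [Finset.mem_range]
      have h8 : i * x.2 + i ≤ i * m := by
        have : i * (x.2 + 1) ≤ i * m := Nat.mul_le_mul_left i (by omega)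
        rw [Nat.mul_add] at this
        omega
      omega
    · intro n hn
      exact Nat.div_add_mod n i
    · intro x hx
      simp only [Finset.mem_product, Finset.mem_range] at hx
      show (((i * x.2 + x.1) % i), ((i * x.2 + x.1) / i)) = x
      rw [Nat.mul_add_mod, Nat.mod_eq_of_lt hx.1, Nat.mul_add_div hipos,
        Nat.div_eq_of_lt hx.1, Nat.add_zero]
    · intro n hn
      simp only [Finset.mem_range] at hn
      show (monomial n) (P.coeff n) =
        X ^ (n % i) * (C (P.coeff (i * (n / i))) * X ^ (i * (n / i)))
      rw [← hblock n (by omega), ← C_mul_X_pow_eq_monomial]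
      rw [show (X : Polynomial ℤ) ^ (n % i) * (C (P.coeff n) * X ^ (i * (n / i)))
          = C (P.coeff n) * (X ^ (i * (n / i)) * X ^ (n % i)) from by ring,
        ← pow_add, Nat.div_add_mod]
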